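/- arXiv:2404.14451 — 3 statements merged into one kernel-verified Lean document; each statement's English description precedes it below -/
import Mathlib

section
/- Let V(D) = ∫ p(x)·log D(x) dμ + ∫ q(x)·log(1 − D(x)) dμ over measurable functions D : α → (0,1), where p, q are densities. Then V is maximized by D*(x) = p(x)/(p(x)+q(x)), i.e., V(D) ≤ V(D*) for all admissible D. -/
open MeasureTheory

lemma gan_key (a b y : ℝ) (ha : 0 ≤ a) (hb : 0 ≤ b) (hy0 : 0 < y) (hy1 : y < 1) :
    a * Real.log y + b * Real.log (1 - y) ≤
    a * Real.log (a / (a + b)) + b * Real.log (1 - a / (a + b)) := by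
  rcases eq_or_lt_of_le (by linarith : (0:ℝ) ≤ a + b) with hab | hab
  · have ha' : a = 0 := by linarith
    have hb' : b = 0 := by linarith
    simp [ha', hb']
  rcases eq_or_lt_of_le ha with ha' | ha'
  · have : a = 0 := ha'.symm
    subst this
    simp only [zero_mul, zero_add, zero_div, sub_zero, Real.log_one, mul_zero]
    have : Real.log (1 - y) ≤ 0 := Real.log_nonpos (by linarith) (by linarith)
    nlinarith
  rcases eq_or_lt_of_le hb with hb' | hb'
  · have : b = 0 := hb'.symm
    subst this
    have : a / (a + 0) = 1 := by field_simp; ring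
    rw [this]
    simp only [Real.log_one, mul_zero, zero_mul, add_zero]
    have : Real.log y ≤ 0 := Real.log_nonpos (by linarith) (by linarith)
    nlinarith
  -- both positive
  have hd0 : 0 < a / (a + b) := div_pos ha' hab
  have hd1 : a / (a + b) < 1 := by rw [div_lt_one hab]; linarith
  have h1 : Real.log y - Real.log (a / (a + b)) ≤ y / (a / (a + b)) - 1 := by
    rw [← Real.log_div (ne_of_gt hy0) (ne_of_gt hd0)]
    exact Real.log_le_sub_one_of_pos (div_pos hy0 hd0)
  have h2 : Real.log (1 - y) - Real.log (1 - a / (a + b)) ≤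
      (1 - y) / (1 - a / (a + b)) - 1 := by
    rw [← Real.log_div (by linarith) (by linarith)]
    exact Real.log_le_sub_one_of_pos (div_pos (by linarith) (by linarith))
  have e1 : a * (y / (a / (a + b)) - 1) = (a + b) * y - a := by
    field_simp
  have e2 : b * ((1 - y) / (1 - a / (a + b)) - 1) = (a + b) * (1 - y) - b := by
    have : 1 - a / (a + b) = b / (a + b) := by field_simp; ring
    rw [this]
    field_simp
  nlinarith [mul_le_mul_of_nonneg_left h1 ha, mul_le_mul_of_nonneg_left h2 hb]

lemma gan_term_nonpos (a b : ℝ) (ha : 0 ≤ a) (hb : 0 ≤ b) :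
    a * Real.log (a / (a + b)) ≤ 0 ∧ b * Real.log (1 - a / (a + b)) ≤ 0 := by
  have hab : 0 ≤ a + b := by linarith
  have hd0 : 0 ≤ a / (a + b) := div_nonneg ha hab
  have hd1 : a / (a + b) ≤ 1 := by
    rcases eq_or_lt_of_le hab with h | h
    · simp [← h]
    · rw [div_le_one h]; linarith
  constructor
  · exact mul_nonpos_of_nonneg_of_nonpos ha (Real.log_nonpos hd0 hd1)
  · exact mul_nonpos_of_nonneg_of_nonpos hb (Real.log_nonpos (by linarith) (by linarith))

/-- Optimal-discriminator lemma: V(D) = ∫ p·log D + ∫ q·log(1−D) is maximized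
over measurable D : α → (0,1) by D*(x) = p(x)/(p(x)+q(x)). -/
theorem stmt_7 {α : Type*} [MeasurableSpace α] (μ : Measure α) [SigmaFinite μ]
    (p q : α → ℝ) (hpm : Measurable p) (hqm : Measurable q)
    (hp0 : ∀ x, 0 ≤ p x) (hq0 : ∀ x, 0 ≤ q x)
    (hp1 : ∫ x, p x ∂μ = 1) (hq1 : ∫ x, q x ∂μ = 1)
    (hpos : ∀ᵐ x ∂μ, 0 < p x + q x)
    (V : (α → ℝ) → ℝ)
    (hV : ∀ D, V D = (∫ x, p x * Real.log (D x) ∂μ) +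
                     (∫ x, q x * Real.log (1 - D x) ∂μ))
    (Dstar : α → ℝ) (hDstar : ∀ x, Dstar x = p x / (p x + q x)) :
    ∀ D : α → ℝ, Measurable D → (∀ x, D x ∈ Set.Ioo (0 : ℝ) 1) →
      Integrable (fun x => p x * Real.log (D x)) μ →
      Integrable (fun x => q x * Real.log (1 - D x)) μ →
      V D ≤ V Dstar := by
  intro D hDm hDmem hip hiq
  have hDse : Dstar = fun x => p x / (p x + q x) := funext hDstar
  have hDsm : Measurable Dstar := by
    rw [hDse]; exact hpm.div (hpm.add hqm)
  set f := fun x => p x * Real.log (D x) + q x * Real.log (1 - D x) with hf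
  set g1 := fun x => p x * Real.log (Dstar x) with hg1
  set g2 := fun x => q x * Real.log (1 - Dstar x) with hg2
  have hfi : Integrable f μ := hip.add hiq
  -- pointwise facts
  have hg1np : ∀ x, g1 x ≤ 0 := fun x => by
    simp only [hg1, hDstar x]
    exact (gan_term_nonpos (p x) (q x) (hp0 x) (hq0 x)).1
  have hg2np : ∀ x, g2 x ≤ 0 := fun x => by
    simp only [hg2, hDstar x]
    exact (gan_term_nonpos (p x) (q x) (hp0 x) (hq0 x)).2
  have hfg : ∀ x, f x ≤ g1 x + g2 x := fun x => by
    simp only [hf, hg1, hg2, hDstar x]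
    exact gan_key (p x) (q x) (D x) (hp0 x) (hq0 x) (hDmem x).1 (hDmem x).2
  have hfnp : ∀ x, f x ≤ 0 := fun x => le_trans (hfg x) (by
    have := hg1np x; have := hg2np x; linarith)
  have hg1m : Measurable g1 := hpm.mul hDsm.log
  have hg2m : Measurable g2 := hqm.mul (measurable_const.sub hDsm).log
  -- integrability of g1, g2: f ≤ g1 + g2 ≤ gi ≤ 0 is wrong; use f ≤ g1 ≤ 0 etc:
  have hfg1 : ∀ x, f x ≤ g1 x := fun x => le_trans (hfg x) (by have := hg2np x; linarith)
  have hfg2 : ∀ x, f x ≤ g2 x := fun x => le_trans (hfg x) (by have := hg1np x; linarith)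
  have hg1i : Integrable g1 μ := by
    refine hfi.neg.mono' hg1m.aestronglyMeasurable (ae_of_all _ fun x => ?_)
    rw [Real.norm_eq_abs, abs_of_nonpos (hg1np x)]
    simp only [Pi.neg_apply]
    linarith [hfg1 x]
  have hg2i : Integrable g2 μ := by
    refine hfi.neg.mono' hg2m.aestronglyMeasurable (ae_of_all _ fun x => ?_)
    rw [Real.norm_eq_abs, abs_of_nonpos (hg2np x)]
    simp only [Pi.neg_apply]
    linarith [hfg2 x]
  have hgi : Integrable (fun x => g1 x + g2 x) μ := hg1i.add hg2i
  calc V D = ∫ x, f x ∂μ := by rw [hV D, ← integral_add hip hiq]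
    _ ≤ ∫ x, g1 x + g2 x ∂μ := integral_mono hfi hgi hfg
    _ = V Dstar := by rw [hV Dstar, ← integral_add hg1i hg2i]
end

section
/- At the optimal discriminator D*(x) = p(x)/(p(x)+q(x)), the objective satisfies V(D*) = KL(p ‖ (p+q)/2) + KL(q ‖ (p+q)/2) − 2·log 2, i.e., V(D*) = 2·JSD(p‖q) − log 4; in particular V(D*) ≥ −log 4 with equality iff p = q a.e. -/
open MeasureTheory

/-- At the optimal discriminator D* = p/(p+q),
V(D*) = KL(p‖(p+q)/2) + KL(q‖(p+q)/2) − 2·log 2 = 2·JSD(p‖q) − log 4;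
in particular V(D*) ≥ −log 4 with equality iff p = q a.e. -/
theorem stmt_8 {α : Type*} [MeasurableSpace α] (μ : Measure α) [SigmaFinite μ]
    (p q : α → ℝ) (hpm : Measurable p) (hqm : Measurable q)
    (hp0 : ∀ x, 0 ≤ p x) (hq0 : ∀ x, 0 ≤ q x)
    (hp1 : ∫ x, p x ∂μ = 1) (hq1 : ∫ x, q x ∂μ = 1)
    (hpos : ∀ᵐ x ∂μ, 0 < p x + q x)
    (V : (α → ℝ) → ℝ)
    (hV : ∀ D, V D = (∫ x, p x * Real.log (D x) ∂μ) +
                     (∫ x, q x * Real.log (1 - D x) ∂μ))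
    (Dstar : α → ℝ) (hDstar : ∀ x, Dstar x = p x / (p x + q x))
    (hip : Integrable (fun x => p x * Real.log (p x / ((p x + q x) / 2))) μ)
    (hiq : Integrable (fun x => q x * Real.log (q x / ((p x + q x) / 2))) μ)
    (hiD : Integrable (fun x => p x * Real.log (Dstar x)) μ)
    (hiD' : Integrable (fun x => q x * Real.log (1 - Dstar x)) μ) :
    V Dstar = (∫ x, p x * Real.log (p x / ((p x + q x) / 2)) ∂μ) +
              (∫ x, q x * Real.log (q x / ((p x + q x) / 2)) ∂μ) - 2 * Real.log 2 ∧
    -Real.log 4 ≤ V Dstar ∧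
    (V Dstar = -Real.log 4 ↔ p =ᵐ[μ] q) := by
  -- integrability of p and q
  have hpint : Integrable p μ := by
    by_contra h; rw [integral_undef h] at hp1; norm_num at hp1
  have hqint : Integrable q μ := by
    by_contra h; rw [integral_undef h] at hq1; norm_num at hq1
  have h4 : Real.log 4 = 2 * Real.log 2 := by
    rw [show (4:ℝ) = 2^2 by norm_num, Real.log_pow]; push_cast; ring
  set A := ∫ x, p x * Real.log (p x / ((p x + q x) / 2)) ∂μ with hAdef
  set B := ∫ x, q x * Real.log (q x / ((p x + q x) / 2)) ∂μ with hBdef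
  -- first part: V Dstar = A + B - 2 log 2
  have e1 : ∀ᵐ x ∂μ, p x * Real.log (Dstar x)
      = p x * Real.log (p x / ((p x + q x) / 2)) - p x * Real.log 2 := by
    filter_upwards [hpos] with x hx
    rw [hDstar]
    rcases eq_or_lt_of_le (hp0 x) with h | h
    · simp [← h]
    · have hd : p x / (p x + q x) = (p x / ((p x + q x) / 2)) / 2 := by
        field_simp
      rw [hd, Real.log_div (div_pos h (by positivity)).ne' (by norm_num)]
      ring
  have e2 : ∀ᵐ x ∂μ, q x * Real.log (1 - Dstar x)
      = q x * Real.log (q x / ((p x + q x) / 2)) - q x * Real.log 2 := by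
    filter_upwards [hpos] with x hx
    rw [hDstar]
    have h1D : 1 - p x / (p x + q x) = q x / (p x + q x) := by
      field_simp; ring
    rw [h1D]
    rcases eq_or_lt_of_le (hq0 x) with h | h
    · simp [← h]
    · have hd : q x / (p x + q x) = (q x / ((p x + q x) / 2)) / 2 := by
        field_simp
      rw [hd, Real.log_div (div_pos h (by positivity)).ne' (by norm_num)]
      ring
  have i1 : ∫ x, p x * Real.log (Dstar x) ∂μ = A - Real.log 2 := by
    rw [integral_congr_ae e1, integral_sub hip (hpint.mul_const _),
      integral_mul_const, hp1, one_mul]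
  have i2 : ∫ x, q x * Real.log (1 - Dstar x) ∂μ = B - Real.log 2 := by
    rw [integral_congr_ae e2, integral_sub hiq (hqint.mul_const _),
      integral_mul_const, hq1, one_mul]
  have hVval : V Dstar = A + B - 2 * Real.log 2 := by
    rw [hV, i1, i2]; ring
  -- nonnegativity of A and B (Gibbs' inequality)
  have key : ∀ r s : α → ℝ, (∀ x, 0 ≤ r x) →
      (∀ᵐ x ∂μ, r x - (p x + q x) / 2 ≤ r x * Real.log (r x / ((p x + q x) / 2))) := by
    intro r s hr0
    filter_upwards [hpos] with x hx
    set m := (p x + q x) / 2 with hmdef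
    have hm : 0 < m := by positivity
    rcases eq_or_lt_of_le (hr0 x) with h | h
    · simp [← h]; linarith
    · have hneg : Real.log (r x / m) = - Real.log (m / r x) := by
        rw [← Real.log_inv, inv_div]
      rw [hneg]
      have hlog : Real.log (m / r x) ≤ m / r x - 1 :=
        Real.log_le_sub_one_of_pos (by positivity)
      have hmul : r x * Real.log (m / r x) ≤ r x * (m / r x - 1) :=
        mul_le_mul_of_nonneg_left hlog h.le
      have hcan : r x * (m / r x - 1) = m - r x := by
        field_simp
      nlinarith [hmul, hcan]
  have hmint : Integrable (fun x => (p x + q x) / 2) μ := by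
    exact (hpint.add hqint).div_const 2
  have hsubint : Integrable (fun x => p x - (p x + q x) / 2) μ :=
    hpint.sub hmint
  have hsubint' : Integrable (fun x => q x - (p x + q x) / 2) μ :=
    hqint.sub hmint
  have hmsum : ∫ x, (p x + q x) / 2 ∂μ = 1 := by
    rw [integral_div, integral_add hpint hqint, hp1, hq1]; norm_num
  have hsub0 : ∫ x, (p x - (p x + q x) / 2) ∂μ = 0 := by
    rw [integral_sub hpint hmint, hp1, hmsum]; ring
  have hsub0' : ∫ x, (q x - (p x + q x) / 2) ∂μ = 0 := by
    rw [integral_sub hqint hmint, hq1, hmsum]; ring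
  have hA : 0 ≤ A := by
    have := integral_mono_ae hsubint hip (key p q hp0)
    rw [hsub0] at this; exact this
  have hB : 0 ≤ B := by
    have := integral_mono_ae hsubint' hiq (key q p hq0)
    rw [hsub0'] at this; exact this
  -- equality case: A = 0 → p = q a.e.
  have hAzero : A = 0 → p =ᵐ[μ] q := by
    intro hA0
    have hg : Integrable (fun x => p x * Real.log (p x / ((p x + q x) / 2))
        - (p x - (p x + q x) / 2)) μ := hip.sub hsubint
    have hgnn : 0 ≤ᵐ[μ] fun x => p x * Real.log (p x / ((p x + q x) / 2))
        - (p x - (p x + q x) / 2) := by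
      filter_upwards [key p q hp0] with x hx
      simpa using sub_nonneg.mpr hx
    have hgint : ∫ x, (p x * Real.log (p x / ((p x + q x) / 2))
        - (p x - (p x + q x) / 2)) ∂μ = 0 := by
      rw [integral_sub hip hsubint, hsub0, ← hAdef, hA0]; ring
    have hgz := (integral_eq_zero_iff_of_nonneg_ae hgnn hg).mp hgint
    filter_upwards [hgz, hpos] with x hx0 hx
    have heq : p x * Real.log (p x / ((p x + q x) / 2))
        = p x - (p x + q x) / 2 := by
      have : p x * Real.log (p x / ((p x + q x) / 2))
        - (p x - (p x + q x) / 2) = 0 := hx0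
      linarith
    set m := (p x + q x) / 2 with hmdef
    have hm : 0 < m := by positivity
    rcases eq_or_lt_of_le (hp0 x) with h | h
    · exfalso
      rw [← h] at heq
      simp at heq
      linarith
    · -- p x > 0; show m / p x = 1
      have hs : m / p x = 1 := by
        by_contra hs
        have hlt : Real.log (m / p x) < m / p x - 1 :=
          Real.log_lt_sub_one_of_pos (by positivity) hs
        have h3 : p x * Real.log (m / p x) < p x * (m / p x - 1) :=
          mul_lt_mul_of_pos_left hlt h
        have h4 : p x * (m / p x - 1) = m - p x := by field_simp
        have h5 : p x * Real.log (m / p x) = -(p x * Real.log (p x / m)) := by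
          rw [show Real.log (m / p x) = -Real.log (p x / m) from by
            rw [← Real.log_inv, inv_div]]
          ring
        rw [h5, h4] at h3
        linarith [heq]
      have : m = p x := (div_eq_one_iff_eq h.ne').mp hs
      rw [hmdef] at this
      linarith
  -- converse: p = q a.e. → A = 0 ∧ B = 0
  have hpq0 : p =ᵐ[μ] q → A = 0 ∧ B = 0 := by
    intro hpq
    have eA : (fun x => p x * Real.log (p x / ((p x + q x) / 2))) =ᵐ[μ] 0 := by
      filter_upwards [hpq] with x hx
      rcases eq_or_lt_of_le (hp0 x) with h | h
      · simp [← h]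
      · have : p x / ((p x + q x) / 2) = 1 := by
          rw [← hx, show (p x + p x) / 2 = p x by ring, div_self h.ne']
        simp [this]
    have eB : (fun x => q x * Real.log (q x / ((p x + q x) / 2))) =ᵐ[μ] 0 := by
      filter_upwards [hpq] with x hx
      rcases eq_or_lt_of_le (hq0 x) with h | h
      · simp [← h]
      · have : q x / ((p x + q x) / 2) = 1 := by
          rw [hx, show (q x + q x) / 2 = q x by ring, div_self h.ne']
        simp [this]
    constructor
    · rw [hAdef, integral_congr_ae eA]; simp
    · rw [hBdef, integral_congr_ae eB]; simp
  refine ⟨hVval, ?_, ?_⟩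
  · rw [hVval, h4]; linarith
  · constructor
    · intro hVeq
      rw [hVval, h4] at hVeq
      exact hAzero (by linarith)
    · intro hpq
      obtain ⟨hA0, hB0⟩ := hpq0 hpq
      rw [hVval, hA0, hB0, h4]; ring
end

section
/- Let V(G, D) = E_{x∼p}[log D(x)] + E_{x∼q_G}[log(1 − D(x))] where q_G is the generator's density. Then min over generator densities q of max over discriminators D of V equals −log 4, attained exactly when q = p a.e. -/
open MeasureTheory

lemma gan_log_aux {a t u : ℝ} (ha : 0 ≤ a) (ht : 0 < t) (hu : 0 < u) :
    a * Real.log t - a * Real.log u ≤ t / u * a - a := by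
  have h := Real.log_le_sub_one_of_pos (div_pos ht hu)
  rw [Real.log_div ht.ne' hu.ne'] at h
  nlinarith [mul_le_mul_of_nonneg_left h ha]

lemma gan_point {a b t : ℝ} (ha : 0 ≤ a) (hb : 0 ≤ b) (hs : 0 < a + b)
    (ht0 : 0 < t) (ht1 : t < 1) :
    a * Real.log t + b * Real.log (1 - t) ≤
      a * Real.log (a / (a + b)) + b * Real.log (1 - a / (a + b)) := by
  have h1 : 1 - a / (a + b) = b / (a + b) := by field_simp; ring
  rw [h1]
  rcases ha.eq_or_lt with rfl | ha'
  · have hb' : 0 < b := by simpa using hs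
    simp only [zero_mul, zero_add, div_self hb'.ne', Real.log_one, mul_zero]
    have : Real.log (1 - t) ≤ 0 := Real.log_nonpos (by linarith) (by linarith)
    nlinarith
  rcases hb.eq_or_lt with rfl | hb'
  · have ha'' : 0 < a := by simpa using hs
    simp only [zero_mul, add_zero, div_self ha''.ne', Real.log_one, mul_zero]
    have : Real.log t ≤ 0 := Real.log_nonpos (by linarith) (by linarith)
    nlinarith
  · have e1 : t / (a / (a + b)) * a = t * (a + b) := by field_simp
    have e2 : (1 - t) / (b / (a + b)) * b = (1 - t) * (a + b) := by field_simp
    have h1 := gan_log_aux ha'.le ht0 (div_pos ha' hs)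
    have h2 := gan_log_aux hb'.le (by linarith : (0:ℝ) < 1 - t) (div_pos hb' hs)
    rw [e1] at h1
    rw [e2] at h2
    nlinarith


/-- GAN minimax: with V(q, D) = ∫ p·log D + ∫ q·log(1−D), for every generator
density q the inner max over discriminators is attained at D* = p/(p+q); the
resulting value is ≥ −log 4, with equality exactly when q = p a.e. Hence
min over q of max over D of V equals −log 4, attained exactly at q = p. -/
theorem stmt_17 {α : Type*} [MeasurableSpace α] (μ : Measure α) [SigmaFinite μ]
    (p : α → ℝ) (hpm : Measurable p) (hp0 : ∀ x, 0 ≤ p x)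
    (hp1 : ∫ x, p x ∂μ = 1)
    (V : (α → ℝ) → (α → ℝ) → ℝ)
    (hV : ∀ q D, V q D = (∫ x, p x * Real.log (D x) ∂μ) +
                         (∫ x, q x * Real.log (1 - D x) ∂μ)) :
    ∀ q : α → ℝ, Measurable q → (∀ x, 0 ≤ q x) → (∫ x, q x ∂μ = 1) →
      (∀ᵐ x ∂μ, 0 < p x + q x) →
      Integrable (fun x => p x * Real.log (p x / (p x + q x))) μ →
      Integrable (fun x => q x * Real.log (1 - p x / (p x + q x))) μ →
      (∀ D : α → ℝ, Measurable D → (∀ x, D x ∈ Set.Ioo (0 : ℝ) 1) →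
        Integrable (fun x => p x * Real.log (D x)) μ →
        Integrable (fun x => q x * Real.log (1 - D x)) μ →
        V q D ≤ V q (fun x => p x / (p x + q x))) ∧
      -Real.log 4 ≤ V q (fun x => p x / (p x + q x)) ∧
      (V q (fun x => p x / (p x + q x)) = -Real.log 4 ↔ q =ᵐ[μ] p) := by
  intro q hqm hq0 hq1 hs hI1 hI2
  have hpI : Integrable p μ := by
    by_contra h; rw [integral_undef h] at hp1; norm_num at hp1
  have hqI : Integrable q μ := by
    by_contra h; rw [integral_undef h] at hq1; norm_num at hq1
  -- the a.e. identity 1 - p/s = q/s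
  have hq_of : ∀ᵐ x ∂μ, q x * Real.log (1 - p x / (p x + q x)) =
      q x * Real.log (q x / (p x + q x)) := by
    filter_upwards [hs] with x hx
    have : 1 - p x / (p x + q x) = q x / (p x + q x) := by field_simp; ring
    rw [this]
  have hI2' : Integrable (fun x => q x * Real.log (q x / (p x + q x))) μ :=
    hI2.congr hq_of
  -- g, h : slack functions
  set g : α → ℝ := fun x => p x * Real.log ((p x + q x) / (2 * p x)) with hg_def
  set h : α → ℝ := fun x => q x * Real.log ((p x + q x) / (2 * q x)) with hh_def
  have e_p : ∀ᵐ x ∂μ, g x =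
      -(p x * Real.log (p x / (p x + q x))) - p x * Real.log 2 := by
    filter_upwards [hs] with x hx
    rcases (hp0 x).eq_or_lt with hp | hp
    · simp [hg_def, ← hp]
    · have hls : Real.log ((p x + q x) / (2 * p x)) =
          Real.log (p x + q x) - (Real.log 2 + Real.log (p x)) := by
        rw [Real.log_div hx.ne' (by positivity), Real.log_mul (by norm_num) hp.ne']
      have hlp : Real.log (p x / (p x + q x)) = Real.log (p x) - Real.log (p x + q x) :=
        Real.log_div hp.ne' hx.ne'
      simp only [hg_def]
      rw [hls, hlp]; ring
  have e_q : ∀ᵐ x ∂μ, h x =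
      -(q x * Real.log (q x / (p x + q x))) - q x * Real.log 2 := by
    filter_upwards [hs] with x hx
    rcases (hq0 x).eq_or_lt with hq | hq
    · simp [hh_def, ← hq]
    · have hls : Real.log ((p x + q x) / (2 * q x)) =
          Real.log (p x + q x) - (Real.log 2 + Real.log (q x)) := by
        rw [Real.log_div hx.ne' (by positivity), Real.log_mul (by norm_num) hq.ne']
      have hlq : Real.log (q x / (p x + q x)) = Real.log (q x) - Real.log (p x + q x) :=
        Real.log_div hq.ne' hx.ne'
      simp only [hh_def]
      rw [hls, hlq]; ring
  have hFpI : Integrable (fun x => -(p x * Real.log (p x / (p x + q x))) - p x * Real.log 2) μ :=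
    hI1.neg.sub (hpI.mul_const _)
  have hFqI : Integrable (fun x => -(q x * Real.log (q x / (p x + q x))) - q x * Real.log 2) μ :=
    hI2'.neg.sub (hqI.mul_const _)
  have hgI : Integrable g μ := hFpI.congr (Filter.EventuallyEq.symm e_p)
  have hhI : Integrable h μ := hFqI.congr (Filter.EventuallyEq.symm e_q)
  -- integral computations
  have hint_p : ∫ x, p x * Real.log 2 ∂μ = Real.log 2 := by
    rw [integral_mul_const, hp1, one_mul]
  have hint_q : ∫ x, q x * Real.log 2 ∂μ = Real.log 2 := by
    rw [integral_mul_const, hq1, one_mul]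
  have hIg : ∫ x, g x ∂μ =
      -(∫ x, p x * Real.log (p x / (p x + q x)) ∂μ) - Real.log 2 := by
    have hnI : Integrable (fun x => -(p x * Real.log (p x / (p x + q x)))) μ := hI1.neg
    rw [integral_congr_ae e_p, integral_sub hnI (hpI.mul_const _), integral_neg, hint_p]
  have hIh : ∫ x, h x ∂μ =
      -(∫ x, q x * Real.log (q x / (p x + q x)) ∂μ) - Real.log 2 := by
    have hnI : Integrable (fun x => -(q x * Real.log (q x / (p x + q x)))) μ := hI2'.neg
    rw [integral_congr_ae e_q, integral_sub hnI (hqI.mul_const _), integral_neg, hint_q]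
  have hlog4 : Real.log 4 = 2 * Real.log 2 := by
    rw [show (4:ℝ) = 2^2 by norm_num, Real.log_pow]; norm_num
  have hVs : V q (fun x => p x / (p x + q x)) =
      (∫ x, p x * Real.log (p x / (p x + q x)) ∂μ) +
      (∫ x, q x * Real.log (1 - p x / (p x + q x)) ∂μ) := hV q _
  have hkey : V q (fun x => p x / (p x + q x)) =
      -(∫ x, g x ∂μ) - (∫ x, h x ∂μ) - Real.log 4 := by
    rw [hVs, integral_congr_ae hq_of]
    linarith [hIg, hIh, hlog4]
  -- upper bounds on ∫ g, ∫ h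
  have hsubI : Integrable (fun x => (q x - p x) / 2) μ := (hqI.sub hpI).div_const 2
  have hsubI' : Integrable (fun x => (p x - q x) / 2) μ := (hpI.sub hqI).div_const 2
  have hsub0 : ∫ x, (q x - p x) / 2 ∂μ = 0 := by
    rw [integral_div, integral_sub hqI hpI, hq1, hp1]; norm_num
  have hsub0' : ∫ x, (p x - q x) / 2 ∂μ = 0 := by
    rw [integral_div, integral_sub hpI hqI, hq1, hp1]; norm_num
  have hgle : ∀ᵐ x ∂μ, g x ≤ (q x - p x) / 2 := by
    filter_upwards [hs] with x hx
    rcases (hp0 x).eq_or_lt with hp | hp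
    · simp only [hg_def, ← hp, zero_mul]
      linarith [hq0 x]
    · have ht : 0 < (p x + q x) / (2 * p x) := by positivity
      have hl := Real.log_le_sub_one_of_pos ht
      have e : p x * ((p x + q x) / (2 * p x) - 1) = (q x - p x) / 2 := by
        field_simp; ring
      simp only [hg_def]
      nlinarith [mul_le_mul_of_nonneg_left hl (hp0 x)]
  have hhle : ∀ᵐ x ∂μ, h x ≤ (p x - q x) / 2 := by
    filter_upwards [hs] with x hx
    rcases (hq0 x).eq_or_lt with hq | hq
    · simp only [hh_def, ← hq, zero_mul]
      linarith [hp0 x]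
    · have ht : 0 < (p x + q x) / (2 * q x) := by positivity
      have hl := Real.log_le_sub_one_of_pos ht
      have e : q x * ((p x + q x) / (2 * q x) - 1) = (p x - q x) / 2 := by
        field_simp; ring
      simp only [hh_def]
      nlinarith [mul_le_mul_of_nonneg_left hl (hq0 x)]
  have hIgle : ∫ x, g x ∂μ ≤ 0 :=
    (integral_mono_ae hgI hsubI hgle).trans_eq hsub0
  have hIhle : ∫ x, h x ∂μ ≤ 0 :=
    (integral_mono_ae hhI hsubI' hhle).trans_eq hsub0'
  refine ⟨?_, ?_, ?_, ?_⟩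
  -- Part 1: optimal discriminator
  · intro D hDm hD hIa hIb
    rw [hV, hVs, ← integral_add hIa hIb, ← integral_add hI1 hI2]
    refine integral_mono_ae (hIa.add hIb) (hI1.add hI2) ?_
    filter_upwards [hs] with x hx
    exact gan_point (hp0 x) (hq0 x) hx (hD x).1 (hD x).2
  -- Part 2: lower bound
  · rw [hkey]; linarith
  -- Part 3, forward
  · intro hveq
    rw [hkey] at hveq
    have hIg0 : ∫ x, g x ∂μ = 0 := by linarith
    have hnn : 0 ≤ᵐ[μ] fun x => (q x - p x) / 2 - g x := by
      filter_upwards [hgle] with x hx; simpa using sub_nonneg.mpr hx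
    have hz : ∫ x, ((q x - p x) / 2 - g x) ∂μ = 0 := by
      rw [integral_sub hsubI hgI, hsub0, hIg0]; ring
    have hae := (integral_eq_zero_iff_of_nonneg_ae hnn (hsubI.sub hgI)).mp hz
    filter_upwards [hae, hs] with x hx0 hxs
    have hx0' : (q x - p x) / 2 - g x = 0 := hx0
    rcases (hp0 x).eq_or_lt with hp | hp
    · exfalso
      have hgx : g x = 0 := by simp [hg_def, ← hp]
      have hq' : q x = 0 := by rw [hgx] at hx0'; linarith
      rw [← hp, hq'] at hxs; norm_num at hxs
    · by_contra hne
      have ht1 : (p x + q x) / (2 * p x) ≠ 1 := by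
        intro he
        apply hne
        field_simp at he
        linarith
      have ht0 : 0 < (p x + q x) / (2 * p x) := by positivity
      have hlt := Real.log_lt_sub_one_of_pos ht0 ht1
      have e : p x * ((p x + q x) / (2 * p x) - 1) = (q x - p x) / 2 := by
        field_simp; ring
      have hgdef : g x = p x * Real.log ((p x + q x) / (2 * p x)) := rfl
      nlinarith [mul_lt_mul_of_pos_left hlt hp]
  -- Part 3, backward
  · intro hqp
    rw [hVs]
    have e1 : ∀ᵐ x ∂μ, p x * Real.log (p x / (p x + q x)) = p x * -Real.log 2 := by
      filter_upwards [hqp, hs] with x he hx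
      rw [he] at hx ⊢
      have hp : 0 < p x := by linarith
      have h2 : p x / (p x + p x) = 2⁻¹ := by
        rw [show p x + p x = 2 * p x by ring]
        rw [mul_comm, div_mul_eq_div_div, div_self hp.ne', one_div]
      rw [h2, Real.log_inv]
    have e2 : ∀ᵐ x ∂μ, q x * Real.log (1 - p x / (p x + q x)) = q x * -Real.log 2 := by
      filter_upwards [hqp, hs] with x he hx
      rw [he] at hx ⊢
      have hp : 0 < p x := by linarith
      have h2 : p x / (p x + p x) = 2⁻¹ := by
        rw [show p x + p x = 2 * p x by ring]
        rw [mul_comm, div_mul_eq_div_div, div_self hp.ne', one_div]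
      rw [h2, show (1:ℝ) - 2⁻¹ = 2⁻¹ by norm_num, Real.log_inv]
    rw [integral_congr_ae e1, integral_congr_ae e2, integral_mul_const,
      integral_mul_const, hp1, hq1, hlog4]
    ring
end
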